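/- ℓ1-norm bound for lasso (Theorem 3.1, second part): Let c > 1 and c̄ = (c+1)/(c−1). Suppose κ(c̄) > 0 and κ(2c̄) > 0, λ > 0, and λ ≥ c·n·‖S‖_∞. Then any lasso estimator β̂ satisfies ‖β̂ − β0‖₁ ≤ max{ (1+2c̄)√s·‖β̂ − β0‖_{2,n}/κ(2c̄) , (1 + 1/(2c̄))·(2c/(c−1))·(n/λ)·c_s² }. -/

import Mathlib

open Finset MeasureTheory ProbabilityTheory

noncomputable section

/-- Prediction norm `‖δ‖_{2,n} = ((1/n) ∑_i (x_i'δ)²)^{1/2}`. -/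
def predNorm (n p : ℕ) (x : Fin n → Fin p → ℝ) (δ : Fin p → ℝ) : ℝ :=
  Real.sqrt ((n : ℝ)⁻¹ * ∑ i, (∑ j, x i j * δ j) ^ 2)

/-- Least-squares criterion `Q̂(β) = (1/n) ∑_i (y_i - x_i'β)²`. -/
def Qls (n p : ℕ) (x : Fin n → Fin p → ℝ) (y : Fin n → ℝ) (β : Fin p → ℝ) : ℝ :=
  (n : ℝ)⁻¹ * ∑ i, (y i - ∑ j, x i j * β j) ^ 2

/-- ℓ1-norm on `ℝ^p`. -/
def l1 {p : ℕ} (v : Fin p → ℝ) : ℝ := ∑ j, |v j|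

/-- sup-norm (max-absolute-coordinate norm) on `ℝ^p`. -/
def supNorm {p : ℕ} (v : Fin p → ℝ) : ℝ := ⨆ j, |v j|

/-- `restr A δ` is `δ` with coordinates outside `A` set to `0`. -/
def restr {p : ℕ} (A : Finset (Fin p)) (δ : Fin p → ℝ) : Fin p → ℝ :=
  fun j => if j ∈ A then δ j else 0

/-- Support of a vector, as a finset. -/
def suppF {p : ℕ} (v : Fin p → ℝ) : Finset (Fin p) :=
  Finset.univ.filter (fun j => v j ≠ 0)

/-- Restricted eigenvalue `κ(c̄)`. -/
def kappaRE (n p : ℕ) (x : Fin n → Fin p → ℝ) (T : Finset (Fin p)) (cbar : ℝ) : ℝ :=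
  sInf {r : ℝ | ∃ δ : Fin p → ℝ, δ ≠ 0 ∧ l1 (restr Tᶜ δ) ≤ cbar * l1 (restr T δ) ∧
    r = Real.sqrt T.card * predNorm n p x δ / l1 (restr T δ)}

/-- Restricted sparse maximal eigenvalue `φ(m)`. -/
def phiRSE (n p : ℕ) (x : Fin n → Fin p → ℝ) (T : Finset (Fin p)) (m : ℕ) : ℝ :=
  sSup {r : ℝ | ∃ δ : Fin p → ℝ, δ ≠ 0 ∧ (suppF (restr Tᶜ δ)).card ≤ m ∧
    r = (predNorm n p x δ) ^ 2 / ∑ j, δ j ^ 2}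

/-- Restricted sparse minimal eigenvalue `κ̃(m)²`. -/
def kappaTildeSq (n p : ℕ) (x : Fin n → Fin p → ℝ) (T : Finset (Fin p)) (m : ℕ) : ℝ :=
  sInf {r : ℝ | ∃ δ : Fin p → ℝ, δ ≠ 0 ∧ (suppF (restr Tᶜ δ)).card ≤ m ∧
    r = (predNorm n p x δ) ^ 2 / ∑ j, δ j ^ 2}

/-- The condition number `μ(m) = √φ(m)/κ̃(m)`. -/
def muCond (n p : ℕ) (x : Fin n → Fin p → ℝ) (T : Finset (Fin p)) (m : ℕ) : ℝ :=
  Real.sqrt (phiRSE n p x T m) / Real.sqrt (kappaTildeSq n p x T m)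

-- auxiliary lemmas (verified)
lemma l1_nonneg {p : ℕ} (v : Fin p → ℝ) : 0 ≤ l1 v :=
  Finset.sum_nonneg fun _ _ => abs_nonneg _

lemma l1_restr_eq {p : ℕ} (A : Finset (Fin p)) (δ : Fin p → ℝ) :
    l1 (restr A δ) = ∑ j ∈ A, |δ j| := by
  unfold l1 restr
  have h : ∀ j : Fin p, |if j ∈ A then δ j else 0| = if j ∈ A then |δ j| else 0 := by
    intro j; split <;> simp
  simp_rw [h]
  rw [Finset.sum_ite_mem, Finset.univ_inter]

lemma l1_split {p : ℕ} (A : Finset (Fin p)) (δ : Fin p → ℝ) :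
    l1 δ = l1 (restr A δ) + l1 (restr Aᶜ δ) := by
  rw [l1_restr_eq, l1_restr_eq]
  exact (Finset.sum_add_sum_compl A _).symm

lemma abs_le_supNorm {p : ℕ} (v : Fin p → ℝ) (j : Fin p) : |v j| ≤ supNorm v := by
  have h : |v j| ≤ ⨆ k, |v k| :=
    le_ciSup (Set.Finite.bddAbove (Set.finite_range fun k => |v k|)) j
  exact h

lemma abs_dot_le {p : ℕ} (S v : Fin p → ℝ) :
    |∑ j, S j * v j| ≤ supNorm S * l1 v := by
  calc |∑ j, S j * v j| ≤ ∑ j, |S j * v j| := Finset.abs_sum_le_sum_abs _ _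
    _ ≤ ∑ j, supNorm S * |v j| := by
        refine Finset.sum_le_sum fun j _ => ?_
        rw [abs_mul]
        exact mul_le_mul_of_nonneg_right (abs_le_supNorm S j) (abs_nonneg _)
    _ = supNorm S * l1 v := by rw [l1, Finset.mul_sum]

lemma abs_sum_mul_le {n : ℕ} (r B : Fin n → ℝ) :
    |∑ i, r i * B i| ≤ Real.sqrt (∑ i, r i ^ 2) * Real.sqrt (∑ i, B i ^ 2) := by
  rw [← Real.sqrt_sq_eq_abs, ← Real.sqrt_mul (by positivity)]
  exact Real.sqrt_le_sqrt (Finset.sum_mul_sq_le_sq_mul_sq _ _ _)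

lemma abs_scaled_CS (n : ℕ) (r B : Fin n → ℝ) :
    |(n : ℝ)⁻¹ * ∑ i, r i * B i| ≤
      Real.sqrt ((n : ℝ)⁻¹ * ∑ i, r i ^ 2) * Real.sqrt ((n : ℝ)⁻¹ * ∑ i, B i ^ 2) := by
  have hnn : (0:ℝ) ≤ (n : ℝ)⁻¹ := by positivity
  rw [abs_mul, abs_of_nonneg hnn, Real.sqrt_mul hnn, Real.sqrt_mul hnn]
  have h := abs_sum_mul_le r B
  have hs : Real.sqrt ((n:ℝ)⁻¹) * Real.sqrt ((n:ℝ)⁻¹) = (n:ℝ)⁻¹ := Real.mul_self_sqrt hnn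
  calc (n:ℝ)⁻¹ * |∑ i, r i * B i|
      ≤ (n:ℝ)⁻¹ * (Real.sqrt (∑ i, r i ^ 2) * Real.sqrt (∑ i, B i ^ 2)) :=
        mul_le_mul_of_nonneg_left h hnn
    _ = (Real.sqrt ((n:ℝ)⁻¹) * Real.sqrt ((n:ℝ)⁻¹)) *
        (Real.sqrt (∑ i, r i ^ 2) * Real.sqrt (∑ i, B i ^ 2)) := by rw [hs]
    _ = Real.sqrt ((n:ℝ)⁻¹) * Real.sqrt (∑ i, r i ^ 2) *
        (Real.sqrt ((n:ℝ)⁻¹) * Real.sqrt (∑ i, B i ^ 2)) := by ring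


set_option maxHeartbeats 1000000 in
/-- Theorem 3.1, second part: ℓ1-norm bound for lasso. -/
theorem lasso_l1_norm_bound
    (n p : ℕ) (hn : 0 < n) (hp : 0 < p)
    (x : Fin n → Fin p → ℝ) (y f : Fin n → ℝ)
    (hx : ∀ j, (n : ℝ)⁻¹ * ∑ i, x i j ^ 2 = 1)
    (β0 : Fin p → ℝ) (T : Finset (Fin p)) (hT : T = suppF β0)
    (s : ℕ) (hs : s = T.card) (hs1 : 1 ≤ s)
    (cs : ℝ) (hcs : cs = Real.sqrt ((n : ℝ)⁻¹ * ∑ i, (f i - ∑ j, x i j * β0 j) ^ 2))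
    (c : ℝ) (hc : 1 < c) (cbar : ℝ) (hcbar : cbar = (c + 1) / (c - 1))
    (hκ1 : 0 < kappaRE n p x T cbar) (hκ2 : 0 < kappaRE n p x T (2 * cbar))
    (S : Fin p → ℝ) (hS : S = fun j => (2 / n : ℝ) * ∑ i, (y i - f i) * x i j)
    (lam : ℝ) (hlam : 0 < lam) (hlamS : c * n * supNorm S ≤ lam)
    (βhat : Fin p → ℝ)
    (hβhat : ∀ β : Fin p → ℝ,
      Qls n p x y βhat + lam / n * l1 βhat ≤ Qls n p x y β + lam / n * l1 β) :
    l1 (βhat - β0) ≤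
      max ((1 + 2 * cbar) * Real.sqrt s * predNorm n p x (βhat - β0) /
            kappaRE n p x T (2 * cbar))
          ((1 + 1 / (2 * cbar)) * (2 * c / (c - 1)) * (n / lam) * cs ^ 2) := by
  classical
  have hn' : (0:ℝ) < n := by exact_mod_cast hn
  have hc0 : (0:ℝ) < c := by linarith
  have hc1 : (0:ℝ) < c - 1 := by linarith
  have hcbar_pos : 0 < cbar := by rw [hcbar]; positivity
  set δ : Fin p → ℝ := βhat - β0 with hδdef
  have hδj : ∀ j, δ j = βhat j - β0 j := fun j => by rw [hδdef]; rfl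
  set t := l1 (restr T δ) with htdef
  set u := l1 (restr Tᶜ δ) with hudef
  set a := predNorm n p x δ with hadef
  have ht0 : 0 ≤ t := by rw [htdef]; exact l1_nonneg _
  have hu0 : 0 ≤ u := by rw [hudef]; exact l1_nonneg _
  have ha0 : 0 ≤ a := by rw [hadef]; exact Real.sqrt_nonneg _
  have hsplit : l1 δ = t + u := by rw [htdef, hudef]; exact l1_split T δ
  have hcs0 : 0 ≤ cs := by rw [hcs]; exact Real.sqrt_nonneg _
  by_cases hcase : u ≤ 2 * cbar * t
  · -- Case 1
    rcases eq_or_lt_of_le ht0 with h | htpos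
    · have hu' : u = 0 := le_antisymm (by nlinarith) hu0
      have hl10 : l1 δ = 0 := by rw [hsplit, ← h, hu']; ring
      rw [hl10]
      refine le_trans ?_ (le_max_left _ _)
      apply div_nonneg
      · exact mul_nonneg (mul_nonneg (by linarith) (Real.sqrt_nonneg _)) ha0
      · exact hκ2.le
    · have hδ0 : δ ≠ 0 := by
        intro h0
        rw [htdef, h0] at htpos
        simp [l1_restr_eq] at htpos
      have hcase' : l1 (restr Tᶜ δ) ≤ 2 * cbar * l1 (restr T δ) := by
        rw [← htdef, ← hudef]; exact hcase
      have hbdd : BddBelow {r : ℝ | ∃ δ' : Fin p → ℝ, δ' ≠ 0 ∧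
          l1 (restr Tᶜ δ') ≤ (2 * cbar) * l1 (restr T δ') ∧
          r = Real.sqrt T.card * predNorm n p x δ' / l1 (restr T δ')} := by
        refine ⟨0, fun r hr => ?_⟩
        obtain ⟨δ', _, _, rfl⟩ := hr
        have h1 := l1_nonneg (restr T δ')
        have h2 := Real.sqrt_nonneg ((T.card : ℕ) : ℝ)
        have h3 : 0 ≤ predNorm n p x δ' := Real.sqrt_nonneg _
        exact div_nonneg (mul_nonneg h2 h3) h1
      have hκle : kappaRE n p x T (2 * cbar) ≤ Real.sqrt T.card * a / t := by
        rw [kappaRE]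
        exact csInf_le hbdd ⟨δ, hδ0, hcase', by rw [hadef, htdef]⟩
      have hκt : kappaRE n p x T (2 * cbar) * t ≤ Real.sqrt T.card * a :=
        (le_div_iff₀ htpos).mp hκle
      have hst : Real.sqrt (s : ℝ) = Real.sqrt (T.card : ℝ) := by rw [hs]
      have h5 : t ≤ Real.sqrt (s : ℝ) * a / kappaRE n p x T (2 * cbar) := by
        rw [hst, le_div_iff₀ hκ2]
        nlinarith [hκt]
      refine le_trans ?_ (le_max_left _ _)
      calc l1 δ = t + u := hsplit
        _ ≤ (1 + 2 * cbar) * t := by nlinarith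
        _ ≤ (1 + 2 * cbar) * (Real.sqrt (s : ℝ) * a / kappaRE n p x T (2 * cbar)) :=
            mul_le_mul_of_nonneg_left h5 (by linarith)
        _ = (1 + 2 * cbar) * Real.sqrt (s : ℝ) * a / kappaRE n p x T (2 * cbar) := by
            ring
  · -- Case 2
    have h2t : 2 * cbar * t < u := lt_of_not_ge hcase
    -- expansion of the quadratic criterion
    have hBsum : ∀ i, ∑ j, x i j * βhat j = ∑ j, x i j * β0 j + ∑ j, x i j * δ j := by
      intro i
      rw [← Finset.sum_add_distrib]
      exact Finset.sum_congr rfl fun j _ => by rw [hδj]; ring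
    have hsum1 : ∑ i, (y i - ∑ j, x i j * βhat j) ^ 2
        = ∑ i, ((y i - ∑ j, x i j * β0 j) ^ 2 + (∑ j, x i j * δ j) ^ 2
            - 2 * ((y i - f i) * (∑ j, x i j * δ j))
            - 2 * ((f i - ∑ j, x i j * β0 j) * (∑ j, x i j * δ j))) :=
      Finset.sum_congr rfl fun i _ => by rw [hBsum i]; ring
    have ha2 : a ^ 2 = (n : ℝ)⁻¹ * ∑ i, (∑ j, x i j * δ j) ^ 2 := by
      rw [hadef, predNorm]
      exact Real.sq_sqrt (by positivity)
    have hQdiff : Qls n p x y βhat = Qls n p x y β0 + a ^ 2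
        - 2 * (n : ℝ)⁻¹ * (∑ i, (y i - f i) * (∑ j, x i j * δ j))
        - 2 * (n : ℝ)⁻¹ * (∑ i, (f i - ∑ j, x i j * β0 j) * (∑ j, x i j * δ j)) := by
      unfold Qls
      rw [hsum1, Finset.sum_sub_distrib, Finset.sum_sub_distrib, Finset.sum_add_distrib,
        ha2]
      rw [show (∑ i, 2 * ((y i - f i) * (∑ j, x i j * δ j)))
          = 2 * ∑ i, (y i - f i) * (∑ j, x i j * δ j) from (Finset.mul_sum _ _ _).symm]
      rw [show (∑ i, 2 * ((f i - ∑ j, x i j * β0 j) * (∑ j, x i j * δ j)))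
          = 2 * ∑ i, (f i - ∑ j, x i j * β0 j) * (∑ j, x i j * δ j) from
          (Finset.mul_sum _ _ _).symm]
      ring
    have hE : ∑ j, S j * δ j = 2 * (n : ℝ)⁻¹ * ∑ i, (y i - f i) * (∑ j, x i j * δ j) := by
      simp only [hS]
      simp only [Finset.mul_sum, Finset.sum_mul]
      rw [Finset.sum_comm]
      exact Finset.sum_congr rfl fun i _ => Finset.sum_congr rfl fun j _ => by ring
    have hsup : supNorm S ≤ lam / (c * n) := by
      rw [le_div_iff₀ (by positivity)]
      nlinarith [hlamS]
    have hEbound : |∑ j, S j * δ j| ≤ lam / (c * n) * l1 δ :=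
      le_trans (abs_dot_le S δ) (mul_le_mul_of_nonneg_right hsup (l1_nonneg δ))
    have hRb : |(n : ℝ)⁻¹ * ∑ i, (f i - ∑ j, x i j * β0 j) * (∑ j, x i j * δ j)|
        ≤ cs * a := by
      have h := abs_scaled_CS n (fun i => f i - ∑ j, x i j * β0 j)
        (fun i => ∑ j, x i j * δ j)
      have hcs' : Real.sqrt ((n : ℝ)⁻¹ * ∑ i, (f i - ∑ j, x i j * β0 j) ^ 2) = cs :=
        hcs.symm
      have ha' : Real.sqrt ((n : ℝ)⁻¹ * ∑ i, (∑ j, x i j * δ j) ^ 2) = a := by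
        rw [hadef, predNorm]
      rw [hcs', ha'] at h
      exact h
    have hl1diff : l1 β0 - l1 βhat ≤ t - u := by
      have hT0 : ∀ j ∈ Tᶜ, β0 j = 0 := by
        intro j hj
        rw [Finset.mem_compl, hT, suppF, Finset.mem_filter] at hj
        push_neg at hj
        exact hj (Finset.mem_univ j)
      have e1 : l1 β0 = ∑ j ∈ T, |β0 j| + ∑ j ∈ Tᶜ, |β0 j| :=
        (Finset.sum_add_sum_compl T _).symm
      have e2 : l1 βhat = ∑ j ∈ T, |βhat j| + ∑ j ∈ Tᶜ, |βhat j| :=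
        (Finset.sum_add_sum_compl T _).symm
      have e3 : ∑ j ∈ Tᶜ, |β0 j| = 0 :=
        Finset.sum_eq_zero fun j hj => by rw [hT0 j hj, abs_zero]
      have e4 : ∑ j ∈ Tᶜ, |βhat j| = u := by
        rw [hudef, l1_restr_eq]
        exact Finset.sum_congr rfl fun j hj => by rw [hδj, hT0 j hj, sub_zero]
      have e5 : ∑ j ∈ T, |β0 j| - ∑ j ∈ T, |βhat j| ≤ t := by
        rw [htdef, l1_restr_eq, ← Finset.sum_sub_distrib]
        refine Finset.sum_le_sum fun j _ => ?_
        rw [hδj]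
        calc |β0 j| - |βhat j| ≤ |β0 j - βhat j| := abs_sub_abs_le_abs_sub _ _
          _ = |βhat j - β0 j| := abs_sub_comm _ _
      linarith
    -- master inequality
    have hmaster : a ^ 2 - 2 * cs * a + (lam / n - lam / (c * n)) * u
        ≤ (lam / n + lam / (c * n)) * t := by
      have h1 := hβhat β0
      rw [hQdiff] at h1
      rw [hsplit] at hEbound
      rw [hE] at hEbound
      have hE1 : 2 * (n : ℝ)⁻¹ * ∑ i, (y i - f i) * (∑ j, x i j * δ j)
          ≤ lam / (c * n) * (t + u) := le_trans (le_abs_self _) hEbound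
      have hR1 : 2 * (n : ℝ)⁻¹ * (∑ i, (f i - ∑ j, x i j * β0 j) * (∑ j, x i j * δ j))
          ≤ 2 * (cs * a) := by
        have h2 : (n : ℝ)⁻¹ * (∑ i, (f i - ∑ j, x i j * β0 j) * (∑ j, x i j * δ j))
            ≤ cs * a := le_trans (le_abs_self _) hRb
        linarith [h2]
      have hL := mul_le_mul_of_nonneg_left hl1diff (div_pos hlam hn').le
      linarith [h1, hE1, hR1, hL]
    have hKpos : 0 < lam / n - lam / (c * n) := by
      have hlt : lam / (c * n) < lam / n := by
        apply div_lt_div_of_pos_left hlam hn'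
        nlinarith
      linarith
    have hLK : lam / n + lam / (c * n) = cbar * (lam / n - lam / (c * n)) := by
      rw [hcbar]; field_simp
    have h3 : (lam / n + lam / (c * n)) * t ≤ (lam / n - lam / (c * n)) * (u / 2) := by
      rw [hLK]
      nlinarith [mul_le_mul_of_nonneg_left h2t.le hKpos.le]
    have h4 : (lam / n - lam / (c * n)) * u / 2 ≤ cs ^ 2 := by
      nlinarith [hmaster, h3, sq_nonneg (cs - a)]
    have hu' : u ≤ 2 * c / (c - 1) * (n / lam) * cs ^ 2 := by
      have hDval : (lam / n - lam / (c * n)) / 2 = lam * (c - 1) / (2 * c * n) := by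
        field_simp
      have hDpos : (0:ℝ) < lam * (c - 1) / (2 * c * n) := by positivity
      have key : u * (lam * (c - 1) / (2 * c * n)) ≤ cs ^ 2 := by
        rw [← hDval]; nlinarith [h4]
      have h6 : u ≤ cs ^ 2 / (lam * (c - 1) / (2 * c * n)) := (le_div_iff₀ hDpos).mpr key
      have heq : cs ^ 2 / (lam * (c - 1) / (2 * c * n))
          = 2 * c / (c - 1) * (n / lam) * cs ^ 2 := by
        field_simp
      linarith [h6, heq.le, heq.ge]
    have htu : t ≤ u / (2 * cbar) := by
      rw [le_div_iff₀ (by linarith : (0:ℝ) < 2 * cbar)]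
      nlinarith [h2t]
    have hfac : (0:ℝ) < 1 + 1 / (2 * cbar) := by
      have : 0 < 1 / (2 * cbar) := by positivity
      linarith
    refine le_trans ?_ (le_max_right _ _)
    calc l1 δ = t + u := hsplit
      _ ≤ u / (2 * cbar) + u := by linarith
      _ = (1 + 1 / (2 * cbar)) * u := by field_simp; ring
      _ ≤ (1 + 1 / (2 * cbar)) * (2 * c / (c - 1) * (n / lam) * cs ^ 2) :=
          mul_le_mul_of_nonneg_left hu' hfac.le
      _ = (1 + 1 / (2 * cbar)) * (2 * c / (c - 1)) * (n / lam) * cs ^ 2 := by ring
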